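/- The language of all words over X^± that reduce to the identity in the free group FG(X) is context-free. -/

import Mathlib

/-- The symmetric alphabet `X^± = X ∪ X̄`, encoded as pairs (letter, sign). -/
abbrev Letter (X : Type) : Type := X × Bool

/-- Formal inverse of a letter. -/
def linv {X : Type} (a : Letter X) : Letter X := (a.1, !a.2)

/-- `wordInv v` is `v̄`: the reverse of `v` with every letter replaced by its inverse. -/
def wordInv {X : Type} (v : List (Letter X)) : List (Letter X) := v.reverse.map linv

/-- The vertex set of the Munn tree of `w`: reductions of all prefixes of `w` in FG(X). -/
def munn {X : Type} (w : List (Letter X)) : Set (FreeGroup X) :=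
  {g | ∃ p : List (Letter X), p <+: w ∧ FreeGroup.mk p = g}

/-- A word represents an idempotent of FIM(X) iff it reduces to 1 in FG(X). -/
def IsIdemWord {X : Type} (w : List (Letter X)) : Prop := FreeGroup.mk w = 1

/-- A word is reduced iff it has no adjacent mutually inverse letters. -/
def Reduced {X : Type} (w : List (Letter X)) : Prop :=
  List.Chain' (fun a b => b ≠ linv a) w

/-- The Munn tree of `w` contains the edge from (the reduced word) `p` to `p · a`. -/
def EdgeIn {X : Type} (w : List (Letter X)) (p : List (Letter X)) (a : Letter X) : Prop :=
  Reduced (p ++ [a]) ∧ FreeGroup.mk p ∈ munn w ∧ FreeGroup.mk (p ++ [a]) ∈ munn w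

/-- An idempotent word avoids `x` iff its Munn tree omits the edge `(ε, x)`. -/
def Avoids {X : Type} (w : List (Letter X)) (x : Letter X) : Prop := ¬ EdgeIn w [] x

/-- Equality in the free inverse monoid FIM(X): equality of Munn trees. -/
def EqFIM {X : Type} (u v : List (Letter X)) : Prop :=
  FreeGroup.mk u = FreeGroup.mk v ∧ munn u = munn v

/-- The alphabet `X^± ∪ {#}`. -/
abbrev HSym (X : Type) : Type := Letter X ⊕ Unit

/-- The hashSym symbol. -/
def hashSym {X : Type} : HSym X := Sum.inr ()

/-- `encode u v = u # v̄`. -/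
def encode {X : Type} (u v : List (Letter X)) : List (HSym X) :=
  u.map Sum.inl ++ hashSym :: (wordInv v).map Sum.inl


instance {T N : Type} [DecidableEq T] [DecidableEq N] : DecidableEq (ContextFreeRule T N) :=
  fun a b => decidable_of_iff (a.input = b.input ∧ a.output = b.output)
    (by cases a; cases b; simp)

/-- Interleaving `e₁x₁e₂x₂⋯e_mx_m`. -/
def interE {X : Type} (es : List (List (Letter X))) (xs : List (Letter X)) : List (Letter X) :=
  (List.zipWith (fun e x => e ++ [x]) es xs).flatten

/-- Interleaving `y₁f₁y₂f₂⋯y_nf_n`. -/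
def interF {X : Type} (ys : List (Letter X)) (fs : List (List (Letter X))) : List (Letter X) :=
  (List.zipWith (fun y f => y :: f) ys fs).flatten

/-- Derivability of a terminal word from a given nonterminal of a grammar. -/
def DerivesFrom {T : Type} (g : ContextFreeGrammar T) (n : g.NT) (w : List T) : Prop :=
  g.Derives [Symbol.nonterminal n] (w.map Symbol.terminal)

namespace IdemCF

variable {X : Type} [Fintype X] [DecidableEq X]

def pairRule (a : Letter X) : ContextFreeRule (Letter X) Unit :=
  ⟨(), [Symbol.terminal a, Symbol.nonterminal (), Symbol.terminal (linv a)]⟩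

@[reducible] def G (X : Type) [Fintype X] [DecidableEq X] : ContextFreeGrammar (Letter X) where
  NT := Unit
  initial := ()
  rules := insert ⟨(), []⟩ (insert ⟨(), [Symbol.nonterminal (), Symbol.nonterminal ()]⟩
    ((Finset.univ : Finset (Letter X)).image pairRule))

def ev : Symbol (Letter X) Unit → FreeGroup X
  | .terminal a => FreeGroup.mk [a]
  | .nonterminal _ => 1

lemma mk_pair (a : Letter X) : FreeGroup.mk [a, linv a] = 1 := by
  have : FreeGroup.reduce [a, linv a] = ([] : List (Letter X)) := by
    simp [FreeGroup.reduce, linv]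
  have h2 := FreeGroup.reduce.self (α := X) (L := [a, linv a])
  rw [this] at h2
  rw [← h2, FreeGroup.one_eq_mk]

lemma mk_eq_prod (w : List (Letter X)) :
    FreeGroup.mk w = (w.map (fun a => FreeGroup.mk [a])).prod := by
  induction w with
  | nil => simp [← FreeGroup.one_eq_mk]
  | cons a t ih =>
    have : (a :: t) = [a] ++ t := rfl
    rw [this, ← FreeGroup.mul_mk, ih]; simp

lemma sound_step {u v : List (Symbol (Letter X) Unit)} (h : (G X).Produces u v) :
    (u.map ev).prod = (v.map ev).prod := by
  obtain ⟨r, hr, hrw⟩ := h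
  obtain ⟨p, q, rfl, rfl⟩ := hrw.exists_parts
  have hout : (r.output.map ev).prod = 1 := by
    have hmem : r = ⟨(), []⟩ ∨ r = ⟨(), [Symbol.nonterminal (), Symbol.nonterminal ()]⟩ ∨
        ∃ a : Letter X, r = pairRule a := by
      have hr' : r ∈ insert (⟨(), []⟩ : ContextFreeRule (Letter X) Unit)
          (insert ⟨(), [Symbol.nonterminal (), Symbol.nonterminal ()]⟩
          ((Finset.univ : Finset (Letter X)).image pairRule)) := hr
      simp only [Finset.mem_insert, Finset.mem_image, Finset.mem_univ, true_and] at hr'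
      rcases hr' with h | h | ⟨a, ha⟩
      · exact Or.inl h
      · exact Or.inr (Or.inl h)
      · exact Or.inr (Or.inr ⟨a, ha.symm⟩)
    rcases hmem with rfl | rfl | ⟨a, rfl⟩
    · simp
    · simp [ev]
    · show (FreeGroup.mk [a] * (1 * (FreeGroup.mk [linv a] * 1))) = 1
      rw [one_mul, mul_one, FreeGroup.mul_mk]
      exact mk_pair a
  simp [List.map_append, List.prod_append, hout, ev]

lemma sound {u v : List (Symbol (Letter X) Unit)} (h : (G X).Derives u v) :
    (u.map ev).prod = (v.map ev).prod := by
  induction h with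
  | refl => rfl
  | tail _ step ih => exact ih.trans (sound_step step)

end IdemCF

namespace IdemCF

variable {X : Type} [Fintype X] [DecidableEq X]

omit [Fintype X] in
lemma reduce_ne_nil_of_mk_ne_one {w : List (Letter X)} (h : FreeGroup.mk w ≠ 1) :
    FreeGroup.reduce (FreeGroup.invRev w) ≠ [] := by
  rw [FreeGroup.reduce_invRev]
  intro hc
  have : FreeGroup.reduce w = [] := by
    have := congrArg FreeGroup.invRev hc
    rwa [FreeGroup.invRev_invRev, FreeGroup.invRev_empty] at this
  apply h
  have h2 := FreeGroup.reduce.self (α := X) (L := w)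
  rw [this, ← FreeGroup.one_eq_mk] at h2
  exact h2.symm

omit [Fintype X] in
lemma invRev_append_singleton (p : List (Letter X)) (y : Letter X) :
    FreeGroup.invRev (p ++ [y]) = linv y :: FreeGroup.invRev p := by
  simp [FreeGroup.invRev, linv]

omit [Fintype X] in
lemma branch : ∀ (q : List (Letter X)) (x : Letter X),
    (∀ k, 1 ≤ k → k ≤ (x :: q).length → FreeGroup.mk ((x :: q).take k) ≠ 1) →
    ∃ M, FreeGroup.reduce (FreeGroup.invRev (x :: q)) = M ++ [linv x] := by
  intro q
  induction q using List.reverseRecOn with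
  | nil =>
    intro x _
    exact ⟨[], by simp [FreeGroup.invRev, linv]⟩
  | append_singleton q' y ih =>
    intro x h
    obtain ⟨M, hM⟩ := ih x (by
      intro k hk1 hk2
      have hlen : k ≤ (x :: q').length := hk2
      have h3 := h k hk1 (by simp at hlen ⊢; omega)
      rwa [show (x :: (q' ++ [y])).take k = (x :: q').take k by
        rw [show x :: (q' ++ [y]) = (x :: q') ++ [y] by simp,
          List.take_append_of_le_length hlen]] at h3)
    have hw : FreeGroup.mk (x :: (q' ++ [y])) ≠ 1 := by
      have := h (x :: (q' ++ [y])).length (by simp) le_rfl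
      rwa [List.take_length] at this
    have hne := reduce_ne_nil_of_mk_ne_one hw
    have hi : FreeGroup.invRev (x :: (q' ++ [y])) = linv y :: FreeGroup.invRev (x :: q') := by
      rw [show x :: (q' ++ [y]) = (x :: q') ++ [y] by simp, invRev_append_singleton]
    rw [hi, FreeGroup.reduce.cons, hM] at hne ⊢
    cases M with
    | nil =>
      simp only [List.nil_append]
      by_cases hc : (linv y).1 = (linv x).1 ∧ (linv y).2 = !(linv x).2
      · exfalso; apply hne; simp [hc]
      · exact ⟨[linv y], by simp [hc]⟩
    | cons m M' =>
      simp only [List.cons_append]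
      by_cases hc : (linv y).1 = m.1 ∧ (linv y).2 = !m.2
      · exact ⟨M', by simp [hc]⟩
      · exact ⟨linv y :: m :: M', by simp [hc]⟩

end IdemCF

namespace IdemCF

variable {X : Type} [Fintype X] [DecidableEq X]

instance : DecidableEq ((G X).NT) := fun a b => by cases a; cases b; exact isTrue rfl

lemma eps_derives : (G X).Derives [Symbol.nonterminal ()] [] := by
  refine Relation.ReflTransGen.single ⟨⟨(), []⟩, Finset.mem_insert_self _ _, ?_⟩
  simpa using ContextFreeRule.Rewrites.input_output (r := (⟨(), []⟩ : ContextFreeRule (Letter X) Unit))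

lemma ss_produces : (G X).Produces [Symbol.nonterminal ()]
    [Symbol.nonterminal (), Symbol.nonterminal ()] := by
  refine ⟨⟨(), [Symbol.nonterminal (), Symbol.nonterminal ()]⟩,
    Finset.mem_insert_of_mem (Finset.mem_insert_self _ _), ?_⟩
  simpa using ContextFreeRule.Rewrites.input_output
    (r := (⟨(), [Symbol.nonterminal (), Symbol.nonterminal ()]⟩ : ContextFreeRule (Letter X) Unit))

lemma pair_produces (a : Letter X) : (G X).Produces [Symbol.nonterminal ()]
    [Symbol.terminal a, Symbol.nonterminal (), Symbol.terminal (linv a)] := by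
  have hmem : pairRule a ∈ (G X).rules :=
    Finset.mem_insert_of_mem (Finset.mem_insert_of_mem
      (Finset.mem_image_of_mem _ (Finset.mem_univ a)))
  exact ⟨pairRule a, hmem,
    by simpa [pairRule] using ContextFreeRule.Rewrites.input_output (r := pairRule (X := X) a)⟩

lemma complete : ∀ n (w : List (Letter X)), w.length ≤ n → FreeGroup.mk w = 1 →
    (G X).Derives [Symbol.nonterminal ()] (w.map Symbol.terminal) := by
  intro n
  induction n with
  | zero =>
    intro w hw _
    rw [List.length_eq_zero_iff.mp (Nat.le_zero.mp hw)]
    exact eps_derives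
  | succ n ih =>
    intro w hw hmk
    match w with
    | [] => exact eps_derives
    | x :: q =>
      by_cases hret : ∃ k, 1 ≤ k ∧ k < (x :: q).length ∧ FreeGroup.mk ((x :: q).take k) = 1
      · obtain ⟨k, hk1, hk2, hkmk⟩ := hret
        set w := x :: q with hwdef
        have hsplit : w.take k ++ w.drop k = w := List.take_append_drop k w
        have hmkv : FreeGroup.mk (w.drop k) = 1 := by
          have : FreeGroup.mk (w.take k) * FreeGroup.mk (w.drop k) = 1 := by
            rw [FreeGroup.mul_mk, hsplit]; exact hmk
          rwa [hkmk, one_mul] at this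
        have hlu : (w.take k).length ≤ n := by
          rw [List.length_take]; omega
        have hlv : (w.drop k).length ≤ n := by
          rw [List.length_drop]; omega
        have Du := ih _ hlu hkmk
        have Dv := ih _ hlv hmkv
        have D2 : (G X).Derives
            ([Symbol.nonterminal ()] ++ [Symbol.nonterminal ()])
            ((w.take k).map Symbol.terminal ++ (w.drop k).map Symbol.terminal) :=
          (Du.append_right _).trans (Dv.append_left _)
        rw [← List.map_append, hsplit] at D2
        exact ss_produces.trans_derives D2
      · push_neg at hret
        rcases q.eq_nil_or_concat with rfl | ⟨q', y, hq⟩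
        · exfalso
          have h1 : FreeGroup.reduce [x] = FreeGroup.reduce ([] : List (Letter X)) :=
            FreeGroup.reduce.sound (by rw [hmk, FreeGroup.one_eq_mk])
          simp at h1
        · -- no proper return to 1
          rw [List.concat_eq_append] at hq
          subst hq
          have hb : ∀ k, 1 ≤ k → k ≤ (x :: q').length →
              FreeGroup.mk ((x :: q').take k) ≠ 1 := by
            intro k hk1 hk2
            have h3 := hret k hk1 (by simp at hk2 ⊢; omega)
            rwa [show (x :: (q' ++ [y])).take k = (x :: q').take k by
              rw [show x :: (q' ++ [y]) = (x :: q') ++ [y] by simp,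
                List.take_append_of_le_length hk2]] at h3
          obtain ⟨M, hM⟩ := branch q' x hb
          have h0 : FreeGroup.reduce (FreeGroup.invRev (x :: (q' ++ [y]))) = [] := by
            rw [FreeGroup.reduce_invRev]
            rw [FreeGroup.reduce.sound (L₂ := []) (by rw [hmk, FreeGroup.one_eq_mk])]
            simp [FreeGroup.invRev]
          rw [show x :: (q' ++ [y]) = (x :: q') ++ [y] by simp,
            invRev_append_singleton, FreeGroup.reduce.cons, hM] at h0
          have hy : y = linv x := by
            cases M with
            | nil =>
              simp only [List.nil_append] at h0
              by_cases hc : (linv y).1 = (linv x).1 ∧ (linv y).2 = !(linv x).2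
              · obtain ⟨hc1, hc2⟩ := hc
                simp only [linv] at hc1 hc2
                simp only [Bool.not_not] at hc2
                have : y.2 = !x.2 := by
                  cases hx2 : x.2 <;> cases hy2 : y.2 <;> simp_all
                ext
                · exact hc1
                · rw [this]; rfl
              · simp [hc] at h0
            | cons m M' =>
              exfalso
              simp only [List.cons_append] at h0
              by_cases hc : (linv y).1 = m.1 ∧ (linv y).2 = !m.2 <;> simp [hc] at h0
          subst hy
          have hq' : FreeGroup.mk q' = 1 := by
            have e : FreeGroup.mk [x] * FreeGroup.mk q' * FreeGroup.mk [linv x] = 1 := by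
              rw [FreeGroup.mul_mk, FreeGroup.mul_mk]
              simpa using hmk
            have hinv : FreeGroup.mk [linv x] = (FreeGroup.mk [x])⁻¹ := by
              have h1 : FreeGroup.mk [x] * FreeGroup.mk [linv x] = 1 := by
                rw [FreeGroup.mul_mk]; exact mk_pair x
              exact (inv_eq_of_mul_eq_one_right h1).symm
            rw [hinv] at e
            have e2 : FreeGroup.mk q' = (FreeGroup.mk [x])⁻¹ *
                (FreeGroup.mk [x] * FreeGroup.mk q' * (FreeGroup.mk [x])⁻¹) *
                FreeGroup.mk [x] := by group
            rw [e, mul_one, inv_mul_cancel] at e2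
            exact e2
          have hlen : q'.length ≤ n := by simp at hw; omega
          have Dq' := ih q' hlen hq'
          have D := ((Dq'.append_left [Symbol.terminal x]).append_right
            [Symbol.terminal (linv x)])
          refine (pair_produces x).trans_derives ?_
          simpa using D

end IdemCF


/-- The language of words over `X^±` reducing to the identity of FG(X) is context-free. -/
theorem idemWords_isContextFree (X : Type) [Fintype X] [DecidableEq X] :
    Language.IsContextFree
      ({w : List (Letter X) | FreeGroup.mk w = 1} : Language (Letter X)) := by
  refine ⟨IdemCF.G X, ?_⟩
  ext w
  simp only [ContextFreeGrammar.mem_language_iff, Set.mem_setOf_eq]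
  constructor
  · intro hd
    have hs := IdemCF.sound hd
    rw [List.map_map] at hs
    have h1 : (([Symbol.nonterminal (IdemCF.G X).initial] :
        List (Symbol (Letter X) Unit)).map IdemCF.ev).prod = 1 := by simp [IdemCF.ev]
    have h2 : w.map (IdemCF.ev ∘ Symbol.terminal) = w.map (fun a => FreeGroup.mk [a]) := rfl
    rw [h1, h2] at hs
    show FreeGroup.mk w = 1
    rw [IdemCF.mk_eq_prod w]
    exact hs.symm
  · intro hw
    exact IdemCF.complete w.length w le_rfl hw
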